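/- Let N, q ≥ 1 be integers, let a < b be positive odd integers, let a_{ij} ≥ 0 (1 ≤ i, j ≤ N) be symmetric weights (a_{ij} = a_{ji}), let d_i ≥ 0 (1 ≤ i ≤ N), and let x_1, …, x_N ∈ ℝ^q. Define ā_{ij} = a_{ij}^{2b/(a+b)}, d̄_i = d_i^{2b/(a+b)}, and Q̄(x) = (1/2)·∑_{i,j=1}^N ā_{ij}·‖x_i − x_j‖² + ∑_{i=1}^N d̄_i·‖x_i‖². Then ∑_{i=1}^N ⟨x_i, ∑_{j=1}^N a_{ij}·(x_i − x_j)^{a/b} + d_i·x_i^{a/b}⟩ ≥ (1/2)·(2·Q̄(x))^{(a+b)/(2b)}. -/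

import Mathlib

open Finset

/-- Signed power: `spow s r = sign s * |s| ^ r`, the real-valued odd-rational power. -/
noncomputable def spow (s r : ℝ) : ℝ := Real.sign s * |s| ^ r

private lemma spow_neg' (s r : ℝ) : spow (-s) r = - spow s r := by
  simp [spow, Real.sign_neg, abs_neg, neg_mul]

private lemma self_mul_spow {r : ℝ} (hr : 0 < r) (s : ℝ) :
    s * spow s r = |s| ^ (1 + r) := by
  rcases lt_trichotomy s 0 with h | rfl | h
  · rw [spow, Real.sign_of_neg h, Real.rpow_add (abs_pos.mpr h.ne) 1 r, Real.rpow_one,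
      abs_of_neg h]
    ring
  · simp [spow, Real.zero_rpow (by linarith : (1:ℝ) + r ≠ 0)]
  · rw [spow, Real.sign_of_pos h, Real.rpow_add (abs_pos.mpr h.ne') 1 r, Real.rpow_one,
      abs_of_pos h]
    ring

private lemma real_rpow_add_le {p : ℝ} (x y : ℝ) (hx : 0 ≤ x) (hy : 0 ≤ y)
    (hp : 0 ≤ p) (hp1 : p ≤ 1) : (x + y) ^ p ≤ x ^ p + y ^ p := by
  rw [← Real.coe_toNNReal x hx, ← Real.coe_toNNReal y hy, ← NNReal.coe_add,
    ← NNReal.coe_rpow, ← NNReal.coe_rpow, ← NNReal.coe_rpow, ← NNReal.coe_add,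
    NNReal.coe_le_coe]
  exact NNReal.rpow_add_le_add_rpow _ _ hp hp1

private lemma rpow_sum_le {ι : Type*} (s : Finset ι) (f : ι → ℝ) {p : ℝ}
    (hf : ∀ i ∈ s, 0 ≤ f i) (hp0 : 0 < p) (hp1 : p ≤ 1) :
    (∑ i ∈ s, f i) ^ p ≤ ∑ i ∈ s, f i ^ p := by
  induction s using Finset.cons_induction with
  | empty => simp [Real.zero_rpow hp0.ne']
  | cons a s ha ih =>
    rw [Finset.sum_cons, Finset.sum_cons]
    have h1 : 0 ≤ f a := hf a (Finset.mem_cons_self a s)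
    have h2 : ∀ i ∈ s, 0 ≤ f i := fun i hi => hf i (Finset.mem_cons_of_mem hi)
    calc (f a + ∑ i ∈ s, f i) ^ p ≤ f a ^ p + (∑ i ∈ s, f i) ^ p :=
          real_rpow_add_le _ _ h1 (Finset.sum_nonneg h2) hp0.le hp1
      _ ≤ f a ^ p + ∑ i ∈ s, f i ^ p := add_le_add (le_refl _) (ih h2)

theorem stmt_12 (N q a b : ℕ) (hN : 1 ≤ N) (hq : 1 ≤ q)
    (ha : Odd a) (hb : Odd b) (ha0 : 0 < a) (hab : a < b)
    (A : Fin N → Fin N → ℝ) (hA : ∀ i j, 0 ≤ A i j) (hAs : ∀ i j, A i j = A j i)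
    (d : Fin N → ℝ) (hd : ∀ i, 0 ≤ d i)
    (x : Fin N → Fin q → ℝ) :
    ∑ i, ∑ k, x i k *
        ((∑ j, A i j * spow (x i k - x j k) ((a : ℝ) / b)) +
          d i * spow (x i k) ((a : ℝ) / b)) ≥
      (1 / 2) *
        (2 * ((1 / 2) * (∑ i, ∑ j,
            A i j ^ (2 * (b : ℝ) / ((a : ℝ) + b)) * (∑ k, (x i k - x j k) ^ 2)) +
          ∑ i, d i ^ (2 * (b : ℝ) / ((a : ℝ) + b)) * (∑ k, (x i k) ^ 2))) ^
          (((a : ℝ) + b) / (2 * b)) := by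
  have hbR : (0:ℝ) < b := by exact_mod_cast ha0.trans hab
  have haR : (0:ℝ) < a := by exact_mod_cast ha0
  have habR : (a:ℝ) < b := by exact_mod_cast hab
  set r : ℝ := (a:ℝ) / b with hrdef
  set p : ℝ := ((a:ℝ) + b) / (2 * b) with hpdef
  set e : ℝ := 2 * (b:ℝ) / ((a:ℝ) + b) with hedef
  have hr0 : 0 < r := div_pos haR hbR
  have hp0 : 0 < p := by rw [hpdef]; positivity
  have hp1 : p ≤ 1 := by
    rw [hpdef, div_le_one (by positivity)]; linarith
  have h2p : 1 + r = 2 * p := by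
    rw [hrdef, hpdef]; field_simp; ring
  have hep : e * p = 1 := by
    rw [hedef, hpdef]; field_simp
  -- abbreviations
  set SA : ℝ := ∑ i, ∑ j, A i j * ∑ k, |x i k - x j k| ^ (1 + r) with hSAdef
  set SD : ℝ := ∑ i, d i * ∑ k, |x i k| ^ (1 + r) with hSDdef
  set G : ℝ := ∑ i, ∑ j, A i j ^ e * (∑ k, (x i k - x j k) ^ 2) with hGdef
  set Db : ℝ := ∑ i, d i ^ e * (∑ k, (x i k) ^ 2) with hDbdef
  set S : ℝ := ∑ i, ∑ j, A i j * ∑ k, x i k * spow (x i k - x j k) r with hSdef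
  -- squares to rpow
  have hsq : ∀ t : ℝ, ((t ^ 2 : ℝ)) ^ p = |t| ^ (1 + r) := by
    intro t
    rw [← sq_abs t, ← Real.rpow_natCast |t| 2, ← Real.rpow_mul (abs_nonneg t)]
    rw [h2p]
    norm_num
  -- symmetrization
  have hswap : S = ∑ i, ∑ j, A i j * ∑ k, -(x j k * spow (x i k - x j k) r) := by
    rw [hSdef, Finset.sum_comm]
    refine Finset.sum_congr rfl fun i _ => Finset.sum_congr rfl fun j _ => ?_
    rw [hAs j i]
    congr 1
    refine Finset.sum_congr rfl fun k _ => ?_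
    rw [show x j k - x i k = -(x i k - x j k) by ring, spow_neg']
    ring
  have h2S : 2 * S = SA := by
    calc 2 * S = S + S := by ring
      _ = S + ∑ i, ∑ j, A i j * ∑ k, -(x j k * spow (x i k - x j k) r) := by rw [← hswap]
      _ = ∑ i, ∑ j, A i j * ∑ k, (x i k - x j k) * spow (x i k - x j k) r := by
          rw [hSdef, ← Finset.sum_add_distrib]
          refine Finset.sum_congr rfl fun i _ => ?_
          rw [← Finset.sum_add_distrib]
          refine Finset.sum_congr rfl fun j _ => ?_
          rw [← mul_add, ← Finset.sum_add_distrib]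
          congr 1
          refine Finset.sum_congr rfl fun k _ => ?_
          ring
      _ = SA := by
          refine Finset.sum_congr rfl fun i _ => Finset.sum_congr rfl fun j _ => ?_
          congr 1
          exact Finset.sum_congr rfl fun k _ => self_mul_spow hr0 _
  -- LHS equality
  have hsplit : ∀ i : Fin N, (∑ k, x i k *
      ((∑ j, A i j * spow (x i k - x j k) r) + d i * spow (x i k) r))
      = (∑ j, A i j * ∑ k, x i k * spow (x i k - x j k) r)
        + d i * ∑ k, |x i k| ^ (1 + r) := by
    intro i
    have hterm : ∀ k : Fin q, x i k *
        ((∑ j, A i j * spow (x i k - x j k) r) + d i * spow (x i k) r)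
        = (∑ j, A i j * (x i k * spow (x i k - x j k) r)) + d i * |x i k| ^ (1 + r) := by
      intro k
      rw [mul_add, Finset.mul_sum]
      congr 1
      · exact Finset.sum_congr rfl fun j _ => by ring
      · rw [← self_mul_spow hr0]; ring
    rw [Finset.sum_congr rfl fun k _ => hterm k, Finset.sum_add_distrib]
    congr 1
    · rw [Finset.sum_comm]
      exact Finset.sum_congr rfl fun j _ => (Finset.mul_sum _ _ _).symm
    · exact (Finset.mul_sum _ _ _).symm
  have hLHS : (∑ i, ∑ k, x i k *
      ((∑ j, A i j * spow (x i k - x j k) r) + d i * spow (x i k) r))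
      = (1/2) * SA + SD := by
    rw [Finset.sum_congr rfl fun i _ => hsplit i, Finset.sum_add_distrib]
    have hS12 : S = (1/2) * SA := by linarith
    rw [hSdef] at hS12
    rw [hS12, hSDdef]
  -- RHS bound pieces
  have hApow : ∀ y : ℝ, 0 ≤ y → (y ^ e) ^ p = y := by
    intro y hy
    rw [← Real.rpow_mul hy, hep, Real.rpow_one]
  have hGterm : ∀ i j, (A i j ^ e * ∑ k, (x i k - x j k) ^ 2) ^ p
      ≤ A i j * ∑ k, |x i k - x j k| ^ (1 + r) := by
    intro i j
    rw [Real.mul_rpow (Real.rpow_nonneg (hA i j) e)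
      (Finset.sum_nonneg fun k _ => sq_nonneg _), hApow _ (hA i j)]
    refine mul_le_mul_of_nonneg_left ?_ (hA i j)
    calc (∑ k, (x i k - x j k) ^ 2) ^ p
        ≤ ∑ k, ((x i k - x j k) ^ 2) ^ p :=
          rpow_sum_le _ _ (fun k _ => sq_nonneg _) hp0 hp1
      _ = ∑ k, |x i k - x j k| ^ (1 + r) :=
          Finset.sum_congr rfl fun k _ => hsq _
  have hDterm : ∀ i : Fin N, (2 * (d i ^ e * ∑ k, (x i k) ^ 2)) ^ p
      ≤ 2 * (d i * ∑ k, |x i k| ^ (1 + r)) := by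
    intro i
    have hs0 : (0:ℝ) ≤ ∑ k, (x i k) ^ 2 := Finset.sum_nonneg fun k _ => sq_nonneg _
    rw [Real.mul_rpow (by norm_num) (mul_nonneg (Real.rpow_nonneg (hd i) e) hs0),
      Real.mul_rpow (Real.rpow_nonneg (hd i) e) hs0, hApow _ (hd i)]
    have h2le : (2:ℝ) ^ p ≤ 2 := by
      calc (2:ℝ) ^ p ≤ (2:ℝ) ^ (1:ℝ) :=
            Real.rpow_le_rpow_of_exponent_le one_le_two hp1
        _ = 2 := Real.rpow_one 2
    have hsum : (∑ k, (x i k) ^ 2) ^ p ≤ ∑ k, |x i k| ^ (1 + r) := by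
      calc (∑ k, (x i k) ^ 2) ^ p ≤ ∑ k, ((x i k) ^ 2) ^ p :=
            rpow_sum_le _ _ (fun k _ => sq_nonneg _) hp0 hp1
        _ = ∑ k, |x i k| ^ (1 + r) := Finset.sum_congr rfl fun k _ => hsq _
    exact mul_le_mul h2le
      (mul_le_mul_of_nonneg_left hsum (hd i))
      (mul_nonneg (hd i) (Real.rpow_nonneg hs0 p)) (by norm_num)
  have hG0 : 0 ≤ G :=
    Finset.sum_nonneg fun i _ => Finset.sum_nonneg fun j _ =>
      mul_nonneg (Real.rpow_nonneg (hA i j) e)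
        (Finset.sum_nonneg fun k _ => sq_nonneg _)
  have hDb0 : 0 ≤ Db :=
    Finset.sum_nonneg fun i _ =>
      mul_nonneg (Real.rpow_nonneg (hd i) e)
        (Finset.sum_nonneg fun k _ => sq_nonneg _)
  have hGp : G ^ p ≤ SA := by
    calc G ^ p ≤ ∑ i, (∑ j, A i j ^ e * ∑ k, (x i k - x j k) ^ 2) ^ p := by
          rw [hGdef]
          exact rpow_sum_le _ _ (fun i _ => Finset.sum_nonneg fun j _ =>
            mul_nonneg (Real.rpow_nonneg (hA i j) e)
              (Finset.sum_nonneg fun k _ => sq_nonneg _)) hp0 hp1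
      _ ≤ ∑ i, ∑ j, (A i j ^ e * ∑ k, (x i k - x j k) ^ 2) ^ p :=
          Finset.sum_le_sum fun i _ => rpow_sum_le _ _ (fun j _ =>
            mul_nonneg (Real.rpow_nonneg (hA i j) e)
              (Finset.sum_nonneg fun k _ => sq_nonneg _)) hp0 hp1
      _ ≤ SA := Finset.sum_le_sum fun i _ => Finset.sum_le_sum fun j _ => hGterm i j
  have hDp : (2 * Db) ^ p ≤ 2 * SD := by
    have hrw : 2 * Db = ∑ i, 2 * (d i ^ e * ∑ k, (x i k) ^ 2) := by
      rw [hDbdef, Finset.mul_sum]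
    calc (2 * Db) ^ p = (∑ i, 2 * (d i ^ e * ∑ k, (x i k) ^ 2)) ^ p := by rw [hrw]
      _ ≤ ∑ i, (2 * (d i ^ e * ∑ k, (x i k) ^ 2)) ^ p :=
          rpow_sum_le _ _ (fun i _ => mul_nonneg (by norm_num)
            (mul_nonneg (Real.rpow_nonneg (hd i) e)
              (Finset.sum_nonneg fun k _ => sq_nonneg _))) hp0 hp1
      _ ≤ ∑ i, 2 * (d i * ∑ k, |x i k| ^ (1 + r)) :=
          Finset.sum_le_sum fun i _ => hDterm i
      _ = 2 * SD := by rw [hSDdef, Finset.mul_sum]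
  -- conclude
  rw [ge_iff_le, hLHS]
  have hGrw : 2 * ((1:ℝ)/2 * G + Db) = G + 2 * Db := by ring
  rw [hGrw]
  have h1 : (G + 2 * Db) ^ p ≤ G ^ p + (2 * Db) ^ p :=
    real_rpow_add_le _ _ hG0 (by linarith) hp0.le hp1
  have : (G + 2 * Db) ^ p ≤ SA + 2 * SD := by linarith
  linarith
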